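/- Every K₄-free disk graph is 11-degenerate; that is, every nonempty induced subgraph of a K₄-free disk graph has a vertex of degree at most 11. -/

import Mathlib

open Finset

def IsTriangle {V : Type*} (G : SimpleGraph V) (T : Finset V) : Prop :=
  T.card = 3 ∧ ∀ u ∈ T, ∀ v ∈ T, u ≠ v → G.Adj u v

def IsK4 {V : Type*} (G : SimpleGraph V) (K : Finset V) : Prop :=
  K.card = 4 ∧ ∀ u ∈ K, ∀ v ∈ K, u ≠ v → G.Adj u v

open Real in
lemma stmt5_cos_half {x : ℝ} (h1 : -(π/3) ≤ x) (h2 : x ≤ π/3) : 1/2 ≤ Real.cos x := by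
  rw [← Real.cos_pi_div_three]
  rcases le_total 0 x with h | h
  · exact Real.cos_le_cos_of_nonneg_of_le_pi h (by linarith [Real.pi_pos]) h2
  · rw [← Real.cos_neg x]
    exact Real.cos_le_cos_of_nonneg_of_le_pi (by linarith) (by linarith [Real.pi_pos]) (by linarith)

open Real in
lemma stmt5_window3 {A B C : ℝ} (h1 : A ≤ B) (h2 : B ≤ C) (h3 : C - A ≤ π/3) :
    1/2 ≤ Real.cos (A - B) ∧ 1/2 ≤ Real.cos (A - C) ∧ 1/2 ≤ Real.cos (B - C) :=
  ⟨stmt5_cos_half (by linarith) (by linarith [Real.pi_pos]),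
   stmt5_cos_half (by linarith) (by linarith [Real.pi_pos]),
   stmt5_cos_half (by linarith) (by linarith [Real.pi_pos])⟩

lemma stmt5_re_mul_conj (z w : ℂ) :
    (z * (starRingEnd ℂ) w).re = ‖z‖ * ‖w‖ * Real.cos (z.arg - w.arg) := by
  have hz := Complex.norm_mul_cos_add_sin_mul_I z
  have hw := Complex.norm_mul_cos_add_sin_mul_I w
  have hzre : z.re = ‖z‖ * Real.cos z.arg := by
    conv_lhs => rw [← hz]
    simp
  have hzim : z.im = ‖z‖ * Real.sin z.arg := by
    conv_lhs => rw [← hz]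
    simp
  have hwre : w.re = ‖w‖ * Real.cos w.arg := by
    conv_lhs => rw [← hw]
    simp
  have hwim : w.im = ‖w‖ * Real.sin w.arg := by
    conv_lhs => rw [← hw]
    simp
  rw [Complex.mul_re, Complex.conj_re, Complex.conj_im, Real.cos_sub, hzre, hzim, hwre, hwim]
  ring

open Real in
lemma stmt5_twelve_sorted (φ : Fin 12 → ℝ) (hm : Monotone φ) (h0 : ∀ i, 0 ≤ φ i)
    (h2π : ∀ i, φ i < 2*π) :
    ∃ i j k : Fin 12, i ≠ j ∧ i ≠ k ∧ j ≠ k ∧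
      1/2 ≤ Real.cos (φ i - φ j) ∧ 1/2 ≤ Real.cos (φ i - φ k) ∧
      1/2 ≤ Real.cos (φ j - φ k) := by
  by_contra hcon
  push_neg at hcon
  have key : ∀ a b c : Fin 12, a < b → b < c → π/3 < φ c - φ a := by
    intro a b c hab hbc
    by_contra hle
    push_neg at hle
    obtain ⟨q1, q2, q3⟩ := stmt5_window3 (hm hab.le) (hm hbc.le) hle
    exact absurd (hcon a b c hab.ne (hab.trans hbc).ne hbc.ne q1 q2) (not_lt.2 q3)
  have w1 : π/3 < (φ 0 + 2*π) - φ 10 := by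
    by_contra hle
    push_neg at hle
    obtain ⟨q1, q2, q3⟩ := stmt5_window3 (hm (show (10:Fin 12) ≤ 11 by decide))
      (show φ 11 ≤ φ 0 + 2*π by linarith [h2π 11, h0 0]) hle
    rw [show φ 10 - (φ 0 + 2*π) = (φ 10 - φ 0) - 2*π by ring, Real.cos_sub_two_pi] at q2
    rw [show φ 11 - (φ 0 + 2*π) = (φ 11 - φ 0) - 2*π by ring, Real.cos_sub_two_pi] at q3
    exact absurd (hcon 10 11 0 (by decide) (by decide) (by decide) q1 q2) (not_lt.2 q3)
  have w2 : π/3 < (φ 1 + 2*π) - φ 11 := by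
    by_contra hle
    push_neg at hle
    obtain ⟨q1, q2, q3⟩ := stmt5_window3
      (show φ 11 ≤ φ 0 + 2*π by linarith [h2π 11, h0 0])
      (show φ 0 + 2*π ≤ φ 1 + 2*π by linarith [hm (show (0:Fin 12) ≤ 1 by decide)]) hle
    rw [show φ 11 - (φ 0 + 2*π) = (φ 11 - φ 0) - 2*π by ring, Real.cos_sub_two_pi] at q1
    rw [show φ 11 - (φ 1 + 2*π) = (φ 11 - φ 1) - 2*π by ring, Real.cos_sub_two_pi] at q2
    rw [show φ 0 + 2*π - (φ 1 + 2*π) = φ 0 - φ 1 by ring] at q3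
    exact absurd (hcon 11 0 1 (by decide) (by decide) (by decide) q1 q2) (not_lt.2 q3)
  have k0 := key 0 1 2 (by decide) (by decide)
  have k1 := key 1 2 3 (by decide) (by decide)
  have k2 := key 2 3 4 (by decide) (by decide)
  have k3 := key 3 4 5 (by decide) (by decide)
  have k4 := key 4 5 6 (by decide) (by decide)
  have k5 := key 5 6 7 (by decide) (by decide)
  have k6 := key 6 7 8 (by decide) (by decide)
  have k7 := key 7 8 9 (by decide) (by decide)
  have k8 := key 8 9 10 (by decide) (by decide)
  have k9 := key 9 10 11 (by decide) (by decide)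
  linarith

open Real in
lemma stmt5_twelve_cos (θ : Fin 12 → ℝ) (hlo : ∀ i, -π < θ i) (hhi : ∀ i, θ i ≤ π) :
    ∃ i j k : Fin 12, i ≠ j ∧ i ≠ k ∧ j ≠ k ∧
      1/2 ≤ Real.cos (θ i - θ j) ∧ 1/2 ≤ Real.cos (θ i - θ k) ∧
      1/2 ≤ Real.cos (θ j - θ k) := by
  set ψ : Fin 12 → ℝ := fun i => if θ i < 0 then θ i + 2*π else θ i with hψ
  have hcos : ∀ i j, Real.cos (ψ i - ψ j) = Real.cos (θ i - θ j) := by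
    intro i j
    simp only [hψ]
    split_ifs
    · rw [show θ i + 2*π - (θ j + 2*π) = θ i - θ j by ring]
    · rw [show θ i + 2*π - θ j = (θ i - θ j) + 2*π by ring, Real.cos_add_two_pi]
    · rw [show θ i - (θ j + 2*π) = (θ i - θ j) - 2*π by ring, Real.cos_sub_two_pi]
    · rfl
  have hb0 : ∀ i, 0 ≤ ψ i := by
    intro i; simp only [hψ]; split_ifs with h
    · linarith [hlo i, Real.pi_pos]
    · linarith
  have hb2 : ∀ i, ψ i < 2*π := by
    intro i; simp only [hψ]; split_ifs with h
    · linarith [Real.pi_pos]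
    · linarith [hhi i, Real.pi_pos]
  set σ := Tuple.sort ψ with hσ
  obtain ⟨i, j, k, hij, hik, hjk, q1, q2, q3⟩ :=
    stmt5_twelve_sorted (ψ ∘ σ) (Tuple.monotone_sort ψ) (fun i => hb0 _) (fun i => hb2 _)
  exact ⟨σ i, σ j, σ k, fun h => hij (σ.injective h), fun h => hik (σ.injective h),
    fun h => hjk (σ.injective h), (hcos _ _) ▸ q1, (hcos _ _) ▸ q2, (hcos _ _) ▸ q3⟩

lemma stmt5_angle_pigeon (z : Fin 12 → ℂ) :
    ∃ i j k : Fin 12, i ≠ j ∧ i ≠ k ∧ j ≠ k ∧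
      ‖z i‖ * ‖z j‖ ≤ 2 * (z i * (starRingEnd ℂ) (z j)).re ∧
      ‖z i‖ * ‖z k‖ ≤ 2 * (z i * (starRingEnd ℂ) (z k)).re ∧
      ‖z j‖ * ‖z k‖ ≤ 2 * (z j * (starRingEnd ℂ) (z k)).re := by
  obtain ⟨i, j, k, hij, hik, hjk, q1, q2, q3⟩ :=
    stmt5_twelve_cos (fun i => (z i).arg) (fun i => Complex.neg_pi_lt_arg _)
      (fun i => Complex.arg_le_pi _)
  have key : ∀ a b : Fin 12, 1/2 ≤ Real.cos ((z a).arg - (z b).arg) →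
      ‖z a‖ * ‖z b‖ ≤ 2 * (z a * (starRingEnd ℂ) (z b)).re := by
    intro a b h
    rw [stmt5_re_mul_conj]
    nlinarith [norm_nonneg (z a), norm_nonneg (z b),
      mul_nonneg (norm_nonneg (z a)) (norm_nonneg (z b))]
  exact ⟨i, j, k, hij, hik, hjk, key _ _ q1, key _ _ q2, key _ _ q3⟩

lemma stmt5_key_ineq (du dw D P m s t : ℝ) (hm : 0 < m) (hms : m ≤ s) (hmt : m ≤ t)
    (hdu0 : 0 ≤ du) (hdw0 : 0 ≤ dw) (hD0 : 0 ≤ D)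
    (hdu : du ≤ m + s) (hdw : dw ≤ m + t)
    (hP : du * dw ≤ 2 * P)
    (hD : D^2 = du^2 + dw^2 - 2*P) : D ≤ s + t := by
  have h1 : D^2 ≤ (s+t)^2 := by
    nlinarith [mul_nonneg (sub_nonneg.2 hdu) hdw0, mul_nonneg (sub_nonneg.2 hdw) hdu0,
      mul_nonneg (sub_nonneg.2 hms) (sub_nonneg.2 hmt),
      mul_nonneg (sub_nonneg.2 hms) hm.le, mul_nonneg (sub_nonneg.2 hmt) hm.le,
      mul_nonneg (sub_nonneg.2 hdu) (sub_nonneg.2 hdw)]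
  nlinarith [sq_nonneg (D - (s+t))]

lemma stmt5_dist_sq (x y : EuclideanSpace ℝ (Fin 2)) :
    dist x y ^ 2 = (x 0 - y 0)^2 + (x 1 - y 1)^2 := by
  rw [EuclideanSpace.dist_eq, Real.sq_sqrt (by positivity)]
  simp [Fin.sum_univ_two, Real.dist_eq, sq_abs]

theorem stmt5 {V : Type*} [Fintype V]
    (c : V → EuclideanSpace ℝ (Fin 2)) (r : V → ℝ) (hr : ∀ v, 0 < r v)
    (G : SimpleGraph V)
    (hG : ∀ u v, G.Adj u v ↔ u ≠ v ∧ dist (c u) (c v) ≤ r u + r v)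
    (hK4 : ∀ K : Finset V, ¬ IsK4 G K) :
    ∀ A : Set V, A.Nonempty → ∃ v ∈ A, ({u | u ∈ A ∧ G.Adj v u}).ncard ≤ 11 := by
  intro A hA
  by_contra hcon
  push_neg at hcon
  classical
  obtain ⟨v, hvA, hvmin⟩ := Set.exists_min_image A r A.toFinite hA
  have hfin : ({u | u ∈ A ∧ G.Adj v u}).Finite := Set.toFinite _
  have h12 : 12 ≤ hfin.toFinset.card := by
    have h := hcon v hvA
    rwa [Set.ncard_eq_toFinset_card _ hfin, Nat.lt_iff_add_one_le] at h
  obtain ⟨t, hts, htcard⟩ := Finset.exists_subset_card_eq h12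
  set e := t.equivFinOfCardEq htcard with he
  set f : Fin 12 → V := fun i => ((e.symm i : t) : V) with hf
  have hfinj : Function.Injective f := by
    intro a b hab
    have : e.symm a = e.symm b := Subtype.ext hab
    exact e.symm.injective this
  have hfmem : ∀ i, f i ∈ A ∧ G.Adj v (f i) := by
    intro i
    have h := hts (e.symm i).2
    rwa [Set.Finite.mem_toFinset] at h
  set z : Fin 12 → ℂ := fun i => ⟨c (f i) 0 - c v 0, c (f i) 1 - c v 1⟩ with hz
  have habs : ∀ a : Fin 12, ‖z a‖ = dist (c (f a)) (c v) := by
    intro a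
    have h1 : (‖z a‖)^2 = dist (c (f a)) (c v) ^ 2 := by
      rw [Complex.sq_norm, stmt5_dist_sq, hz]
      simp [Complex.normSq_mk]
      ring
    rw [← Real.sqrt_sq (norm_nonneg (z a)), h1, Real.sqrt_sq dist_nonneg]
  have adj : ∀ a b : Fin 12, a ≠ b →
      ‖z a‖ * ‖z b‖ ≤ 2 * (z a * (starRingEnd ℂ) (z b)).re →
      G.Adj (f a) (f b) := by
    intro a b hab hq
    rw [hG]
    refine ⟨fun h => hab (hfinj h), ?_⟩
    have hda : dist (c (f a)) (c v) ≤ r v + r (f a) := by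
      have h := ((hG v (f a)).1 (hfmem a).2).2
      rwa [dist_comm] at h
    have hdb : dist (c (f b)) (c v) ≤ r v + r (f b) := by
      have h := ((hG v (f b)).1 (hfmem b).2).2
      rwa [dist_comm] at h
    have hD : dist (c (f a)) (c (f b)) ^ 2 = dist (c (f a)) (c v) ^ 2 +
        dist (c (f b)) (c v) ^ 2 - 2 * (z a * (starRingEnd ℂ) (z b)).re := by
      simp only [hz, stmt5_dist_sq, Complex.mul_re, Complex.conj_re, Complex.conj_im]
      ring
    rw [habs a, habs b] at hq
    exact stmt5_key_ineq _ _ _ _ (r v) _ _ (hr v) (hvmin _ (hfmem a).1) (hvmin _ (hfmem b).1)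
      dist_nonneg dist_nonneg dist_nonneg hda hdb hq hD
  obtain ⟨i, j, k, hij, hik, hjk, q1, q2, q3⟩ := stmt5_angle_pigeon z
  have aij : G.Adj (f i) (f j) := adj i j hij q1
  have aik : G.Adj (f i) (f k) := adj i k hik q2
  have ajk : G.Adj (f j) (f k) := adj j k hjk q3
  have avi : G.Adj v (f i) := (hfmem i).2
  have avj : G.Adj v (f j) := (hfmem j).2
  have avk : G.Adj v (f k) := (hfmem k).2
  have hvi : v ≠ f i := avi.ne
  have hvj : v ≠ f j := avj.ne
  have hvk : v ≠ f k := avk.ne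
  have hij' : f i ≠ f j := aij.ne
  have hik' : f i ≠ f k := aik.ne
  have hjk' : f j ≠ f k := ajk.ne
  apply hK4 {v, f i, f j, f k}
  constructor
  · rw [Finset.card_insert_of_notMem (by simp [hvi, hvj, hvk]),
      Finset.card_insert_of_notMem (by simp [hij', hik']),
      Finset.card_insert_of_notMem (by simp [hjk']), Finset.card_singleton]
  · intro u hu w hw huw
    simp only [Finset.mem_insert, Finset.mem_singleton] at hu hw
    rcases hu with rfl | rfl | rfl | rfl <;> rcases hw with rfl | rfl | rfl | rfl <;>
      first
        | exact absurd rfl huw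
        | assumption
        | exact G.adj_symm avi
        | exact G.adj_symm avj
        | exact G.adj_symm avk
        | exact G.adj_symm aij
        | exact G.adj_symm aik
        | exact G.adj_symm ajk
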